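/- arXiv:1103.2905 — 2 statements merged into one kernel-verified Lean document; each statement's English description precedes it below -/
import Mathlib

section
/- The function (x, r) ↦ δ_x(r), defined for x ∈ ℂ and r > 0 where δ_x(r) is the supremum of radii of open disks contained in D(x,r) \ K for a fixed compact set K ⊂ ℂ (and δ_x(r) = 0 when D(x,r) ⊆ K), is continuous in (x, r). -/
set_option autoImplicit false

open Set Metric Filter

/-- `deltaFn K x r` : the supremum of radii of open disks contained in `D(x,r) \ K`
(with `sup ∅ = 0`, and `= 0` when `D(x,r) ⊆ K`). -/
noncomputable def deltaFn (K : Set ℂ) (x : ℂ) (r : ℝ) : ℝ :=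
  sSup {s : ℝ | 0 ≤ s ∧ ∃ y : ℂ, Metric.ball y s ⊆ Metric.ball x r \ K}

lemma ball_sub_ball_dist {y x : ℂ} {s r : ℝ} (h : Metric.ball y s ⊆ Metric.ball x r)
    (hs : 0 < s) : dist y x + s ≤ r := by
  have key : ∀ c : ℝ, 0 ≤ c → c < s → dist y x + c < r := by
    intro c hc0 hcs
    set u : ℂ := if h : y = x then 1 else (y - x) / ‖y - x‖ with hu
    have hunorm : ‖u‖ = 1 := by
      rw [hu]
      split_ifs with h'
      · simp
      · rw [norm_div, Complex.norm_real, Real.norm_eq_abs, abs_of_nonneg (norm_nonneg _),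
          div_self (by simpa [sub_eq_zero] using h')]
    have hz : (y + c • u) ∈ Metric.ball y s := by
      simp [dist_eq_norm, norm_smul, hunorm, abs_of_nonneg hc0, hcs]
    have hzr := h hz
    rw [mem_ball, dist_eq_norm] at hzr
    have hdist : ‖y + c • u - x‖ = dist y x + c := by
      rw [hu]
      split_ifs with h'
      · simp [h', dist_eq_norm, norm_smul, abs_of_nonneg hc0]
      · have hyx : ‖y - x‖ ≠ 0 := by
          simpa [sub_eq_zero] using h'
        have : y + c • ((y - x) / ‖y - x‖) - x = (1 + c / ‖y - x‖) • (y - x) := by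
          simp only [Complex.real_smul]
          push_cast
          ring
        rw [this, norm_smul, dist_eq_norm]
        have h1 : 0 ≤ 1 + c / ‖y - x‖ := by positivity
        rw [Real.norm_eq_abs, abs_of_nonneg h1]
        have hyx' : ‖y - x‖ ≠ 0 := hyx
        field_simp
    linarith [hdist ▸ hzr]
  have : s ≤ r - dist y x := by
    refine le_of_forall_lt fun b hb => ?_
    have h1 := key (max b 0) (le_max_right _ _) (max_lt hb hs)
    have := le_max_left b 0
    linarith
  linarith

lemma deltaFn_setdef (K : Set ℂ) (x : ℂ) (r : ℝ) :
    (0 : ℝ) ∈ {s : ℝ | 0 ≤ s ∧ ∃ y : ℂ, Metric.ball y s ⊆ Metric.ball x r \ K} :=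
  ⟨le_refl 0, x, by simp⟩

lemma deltaFn_bdd (K : Set ℂ) (x : ℂ) (r : ℝ) :
    BddAbove {s : ℝ | 0 ≤ s ∧ ∃ y : ℂ, Metric.ball y s ⊆ Metric.ball x r \ K} := by
  refine ⟨max r 0, fun s hs => ?_⟩
  obtain ⟨hs0, y, hy⟩ := hs
  rcases eq_or_lt_of_le hs0 with h | h
  · simp [← h]
  · have := ball_sub_ball_dist (hy.trans (diff_subset)) h
    have := dist_nonneg (x := y) (y := x)
    exact le_max_of_le_left (by linarith)

lemma deltaFn_nonneg (K : Set ℂ) (x : ℂ) (r : ℝ) : 0 ≤ deltaFn K x r :=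
  le_csSup (deltaFn_bdd K x r) (deltaFn_setdef K x r)

lemma deltaFn_le (K : Set ℂ) (x x' : ℂ) (r r' : ℝ) :
    deltaFn K x r ≤ deltaFn K x' r' + (dist x x' + |r - r'|) := by
  set ε := dist x x' + |r - r'| with hε
  have hε0 : 0 ≤ ε := by positivity
  refine csSup_le ⟨0, deltaFn_setdef K x r⟩ fun s hs => ?_
  obtain ⟨hs0, y, hy⟩ := hs
  rcases le_or_gt s ε with h | h
  · linarith [deltaFn_nonneg K x' r']
  · have hsub : Metric.ball y (s - ε) ⊆ Metric.ball x' r' \ K := by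
      have hd : dist y x + s ≤ r :=
        ball_sub_ball_dist (hy.trans diff_subset) (by linarith)
    -- ball y (s-ε) ⊆ ball x' r'
      have h1 : Metric.ball y (s - ε) ⊆ Metric.ball x' r' := by
        apply ball_subset_ball'
        have := dist_triangle y x x'
        have := abs_sub_le_iff.mp (le_refl |r - r'|)
        have hrr : r - r' ≤ |r - r'| := le_abs_self _
        linarith
      intro z hz
      have hz' : z ∈ Metric.ball y s := ball_subset_ball (by linarith) hz
      exact ⟨h1 hz, (hy hz').2⟩
    have : s - ε ≤ deltaFn K x' r' :=
      le_csSup (deltaFn_bdd K x' r') ⟨by linarith, y, hsub⟩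
    linarith

/-- For a fixed compact `K ⊂ ℂ`, the function `(x, r) ↦ δ_x(r)` is continuous
on `{(x, r) : r > 0}`. -/
theorem deltaFn_continuousOn (K : Set ℂ) (hK : IsCompact K) :
    ContinuousOn (fun p : ℂ × ℝ => deltaFn K p.1 p.2) {p : ℂ × ℝ | 0 < p.2} := by
  have hlip : LipschitzWith 2 (fun p : ℂ × ℝ => deltaFn K p.1 p.2) := by
    rw [lipschitzWith_iff_dist_le_mul]
    intro p q
    have h1 := deltaFn_le K p.1 q.1 p.2 q.2
    have h2 := deltaFn_le K q.1 p.1 q.2 p.2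
    have hd1 : dist p.1 q.1 ≤ dist p q := le_max_left _ _
    have hd2 : |p.2 - q.2| ≤ dist p q := by
      rw [← Real.dist_eq]; exact le_max_right _ _
    rw [abs_sub_comm, dist_comm q.1 p.1] at h2
    rw [Real.dist_eq, abs_le]
    push_cast
    constructor <;> linarith
  exact hlip.continuous.continuousOn
end

section
/- Let g: U → ℂ be univalent on a disk U = D(x, r₀), let v = |g'(x)| > 0, and suppose t ∈ (0,1) is such that v/2 ≤ |g'(z)| ≤ 2v for all z ∈ D(x, t·r₀). If D(y, s) ⊆ D(x, t·r₀), then g(D(y,s)) ⊇ D(g(y), v·s/8) and g(D(x,r)) ⊆ D(g(x), 2·v·r) for any r with D(x,r) ⊆ D(x, t·r₀). -/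
set_option autoImplicit false

open Set Metric Filter

/-- Koebe-type estimates for a univalent map `g` on `D(x, r₀)` with
`v/2 ≤ |g'| ≤ 2v` on `D(x, t r₀)`: inner disks and outer disks for images. -/
theorem koebe_image_disk_bounds
    (x : ℂ) (r₀ v t : ℝ) (hr₀ : 0 < r₀)
    (g : ℂ → ℂ)
    (hdiff : DifferentiableOn ℂ g (Metric.ball x r₀))
    (hinj : Set.InjOn g (Metric.ball x r₀))
    (hv : v = ‖deriv g x‖) (hvpos : 0 < v)
    (ht : t ∈ Set.Ioo (0 : ℝ) 1)
    (hbound : ∀ z ∈ Metric.ball x (t * r₀),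
      v / 2 ≤ ‖deriv g z‖ ∧ ‖deriv g z‖ ≤ 2 * v) :
    (∀ (y : ℂ) (s : ℝ), 0 < s → Metric.ball y s ⊆ Metric.ball x (t * r₀) →
      Metric.ball (g y) (v * s / 8) ⊆ g '' Metric.ball y s) ∧
    (∀ r : ℝ, 0 < r → Metric.ball x r ⊆ Metric.ball x (t * r₀) →
      g '' Metric.ball x r ⊆ Metric.ball (g x) (2 * v * r)) := by
  obtain ⟨ht0, ht1⟩ := ht
  have hsub0 : Metric.ball x (t * r₀) ⊆ Metric.ball x r₀ :=
    Metric.ball_subset_ball (by nlinarith)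
  have hdiffAt : ∀ z ∈ Metric.ball x (t * r₀), DifferentiableAt ℂ g z := fun z hz =>
    hdiff.differentiableAt (isOpen_ball.mem_nhds (hsub0 hz))
  constructor
  · -- inner disk
    intro y s hs hsub w₀ hw₀
    set Δ : ℂ := w₀ - g y with hΔdef
    have hΔ : ‖Δ‖ < v * s / 8 := by
      have := Metric.mem_ball.mp hw₀
      rwa [dist_eq_norm] at this
    set C : ℝ := 4 / v * ‖Δ‖ with hCdef
    have hC0 : 0 ≤ C := by positivity
    have hChalf : C < s / 2 := by
      have h4v : 0 < 4 / v := by positivity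
      calc C < 4 / v * (v * s / 8) := mul_lt_mul_of_pos_left hΔ h4v
        _ = s / 2 := by field_simp; ring
    set w : ℝ → ℂ := fun u => g y + (u : ℂ) * Δ with hwdef
    set S : Set ℝ := {u : ℝ | u ∈ Set.Icc (0:ℝ) 1 ∧ ∃ z, ‖z - y‖ ≤ C * u ∧ g z = w u}
      with hSdef
    have h0S : (0:ℝ) ∈ S := by
      refine ⟨⟨le_refl _, zero_le_one⟩, y, by simp, by simp [hwdef]⟩
    -- any point with distance ≤ C from y is well inside the balls
    have hmem : ∀ z : ℂ, ‖z - y‖ ≤ C → z ∈ Metric.ball y s := by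
      intro z hz
      rw [Metric.mem_ball, dist_eq_norm]
      linarith
    -- S is compact
    have hScompact : IsCompact S := by
      set K := Metric.closedBall y (s / 2) with hKdef
      have hKball : K ⊆ Metric.ball x r₀ := by
        intro z hz
        apply hsub0; apply hsub
        rw [Metric.mem_closedBall] at hz
        rw [Metric.mem_ball]
        linarith
      set T : Set (ℝ × ℂ) :=
        {p : ℝ × ℂ | p ∈ Set.Icc (0:ℝ) 1 ×ˢ K ∧ ‖p.2 - y‖ ≤ C * p.1 ∧ g p.2 = w p.1}
        with hTdef
      have hTclosed : IsClosed T := by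
        have h1 : IsClosed (Set.Icc (0:ℝ) 1 ×ˢ K) :=
          isClosed_Icc.prod Metric.isClosed_closedBall
        have h2 : IsClosed {p : ℝ × ℂ | ‖p.2 - y‖ ≤ C * p.1} :=
          isClosed_le (by fun_prop) (by fun_prop)
        have h3 : IsClosed ((Set.Icc (0:ℝ) 1 ×ˢ K) ∩
            (fun p : ℝ × ℂ => g p.2 - w p.1) ⁻¹' {0}) := by
          apply ContinuousOn.preimage_isClosed_of_isClosed _ h1 isClosed_singleton
          apply ContinuousOn.sub
          · exact (hdiff.continuousOn.mono hKball).comp continuous_snd.continuousOn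
              (fun p hp => hp.2)
          · fun_prop
        have : T = ((Set.Icc (0:ℝ) 1 ×ˢ K) ∩
            (fun p : ℝ × ℂ => g p.2 - w p.1) ⁻¹' {0}) ∩ {p : ℝ × ℂ | ‖p.2 - y‖ ≤ C * p.1} := by
          ext p
          simp only [hTdef, Set.mem_setOf_eq, Set.mem_inter_iff, Set.mem_preimage,
            Set.mem_singleton_iff, sub_eq_zero]
          tauto
        rw [this]
        exact (h3.inter h2)
      have hTcompact : IsCompact T :=
        ((isCompact_Icc.prod (isCompact_closedBall y (s/2))).of_isClosed_subset hTclosed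
          (fun p hp => hp.1))
      have hST : S = Prod.fst '' T := by
        ext u
        constructor
        · rintro ⟨hu, z, hz1, hz2⟩
          refine ⟨(u, z), ⟨⟨hu, ?_⟩, hz1, hz2⟩, rfl⟩
          rw [hKdef, Metric.mem_closedBall, dist_eq_norm]
          calc ‖z - y‖ ≤ C * u := hz1
            _ ≤ C * 1 := by nlinarith [hu.1, hu.2]
            _ ≤ s / 2 := by linarith
        · rintro ⟨⟨u', z⟩, ⟨⟨hu, _⟩, hz1, hz2⟩, rfl⟩
          exact ⟨hu, z, hz1, hz2⟩
      rw [hST]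
      exact hTcompact.image continuous_fst
    have hSne : S.Nonempty := ⟨0, h0S⟩
    have hbddS : BddAbove S := ⟨1, fun u hu => hu.1.2⟩
    set u₀ : ℝ := sSup S with hu₀def
    have hu₀S : u₀ ∈ S := hScompact.sSup_mem hSne
    have hu₀le : u₀ ≤ 1 := hu₀S.1.2
    have hu₀eq : u₀ = 1 := by
      by_contra hne1
      have hu₀lt : u₀ < 1 := lt_of_le_of_ne hu₀le hne1
      obtain ⟨⟨hu₀0, _⟩, z, hz1, hz2⟩ := hu₀S
      have hzC : ‖z - y‖ ≤ C := le_trans hz1 (by nlinarith)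
      have hzball : z ∈ Metric.ball y s := hmem z hzC
      have hzt : z ∈ Metric.ball x (t * r₀) := hsub hzball
      have hdlow : v / 2 ≤ ‖deriv g z‖ := (hbound z hzt).1
      have hdne : deriv g z ≠ 0 := by
        intro h
        rw [h] at hdlow; simp at hdlow; linarith
      have hA : AnalyticAt ℂ g z := hdiff.analyticAt (isOpen_ball.mem_nhds (hsub0 hzt))
      have hstrict : HasStrictDerivAt g (deriv g z) z := by
        have := hA.hasStrictFDerivAt.hasStrictDerivAt
        rwa [fderiv_apply_one_eq_deriv] at this
      set h := hstrict.localInverse g (deriv g z) z hdne with hhdef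
      have hinvd : HasStrictDerivAt h (deriv g z)⁻¹ (g z) := hstrict.to_localInverse hdne
      have habspos : (0:ℝ) < ‖deriv g z‖ := by
        have := norm_nonneg (deriv g z); linarith
      have hnd : ‖(deriv g z)⁻¹‖ ≤ 2 / v := by
        rw [norm_inv,
          inv_le_comm₀ habspos (by positivity), inv_div]
        exact hdlow
      have hlo := hasDerivAt_iff_isLittleO.mp hinvd.hasDerivAt
      have hb2 := hlo.def (show (0:ℝ) < 2 / v by positivity)
      have hri : ∀ᶠ w' in nhds (g z), g (h w') = w' :=
        (hstrict.hasStrictFDerivAt_equiv hdne).eventually_right_inverse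
      have hz_eq : h (g z) = z :=
        (hstrict.hasStrictFDerivAt_equiv hdne).localInverse_apply_image
      have hev := hb2.and hri
      rw [Metric.eventually_nhds_iff] at hev
      obtain ⟨δ, hδ0, hδ⟩ := hev
      set u' : ℝ := min 1 (u₀ + δ / (‖Δ‖ + 1)) with hu'def
      have hpos' : 0 < δ / (‖Δ‖ + 1) := by positivity
      have hu'gt : u₀ < u' := lt_min hu₀lt (by linarith)
      have hu'le1 : u' ≤ 1 := min_le_left _ _
      have hu'le : u' - u₀ ≤ δ / (‖Δ‖ + 1) := by
        have := min_le_right 1 (u₀ + δ / (‖Δ‖ + 1))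
        linarith
      have hwdiff : w u' - w u₀ = ((u' - u₀ : ℝ) : ℂ) * Δ := by
        simp only [hwdef]
        push_cast
        ring
      have hwnorm : ‖w u' - w u₀‖ = (u' - u₀) * ‖Δ‖ := by
        rw [hwdiff, norm_mul, Complex.norm_real, Real.norm_eq_abs,
          abs_of_nonneg (by linarith)]
      have hdist : dist (w u') (g z) < δ := by
        rw [hz2, dist_eq_norm, hwnorm]
        have h1 : (u' - u₀) * ‖Δ‖ ≤ δ / (‖Δ‖ + 1) * ‖Δ‖ :=
          mul_le_mul_of_nonneg_right hu'le (norm_nonneg _)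
        have h2 : δ / (‖Δ‖ + 1) * ‖Δ‖ < δ := by
          rw [div_mul_eq_mul_div, div_lt_iff₀ (by positivity)]
          nlinarith [norm_nonneg Δ]
        linarith
      obtain ⟨hbnd, hri'⟩ := hδ hdist
      set z' : ℂ := h (w u') with hz'def
      have hzz' : ‖z' - z‖ ≤ 4 / v * ((u' - u₀) * ‖Δ‖) := by
        have h1 : ‖z' - z - (w u' - g z) • (deriv g z)⁻¹‖ ≤ 2 / v * ‖w u' - g z‖ := by
          simpa [hz_eq] using hbnd
        have h2 : ‖w u' - g z‖ = (u' - u₀) * ‖Δ‖ := by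
          rw [hz2, hwnorm]
        set c : ℂ := (w u' - g z) • (deriv g z)⁻¹ with hcdef
        calc ‖z' - z‖
            ≤ ‖z' - z - c‖ + ‖c‖ := by
              have h3 : z' - z = (z' - z - c) + c := by ring
              conv_lhs => rw [h3]
              exact norm_add_le _ _
          _ ≤ 2 / v * ‖w u' - g z‖ + ‖w u' - g z‖ * (2 / v) := by
              refine add_le_add h1 ?_
              rw [hcdef, norm_smul]
              exact mul_le_mul_of_nonneg_left hnd (norm_nonneg _)
          _ = 4 / v * ‖w u' - g z‖ := by ring
          _ = 4 / v * ((u' - u₀) * ‖Δ‖) := by rw [h2]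
      have hu'S : u' ∈ S := by
        refine ⟨⟨by linarith, hu'le1⟩, z', ?_, hri'⟩
        have h4 : z' - y = (z - y) + (z' - z) := by ring
        calc ‖z' - y‖ ≤ ‖z - y‖ + ‖z' - z‖ := by rw [h4]; exact norm_add_le _ _
          _ ≤ C * u₀ + 4 / v * ((u' - u₀) * ‖Δ‖) := add_le_add hz1 hzz'
          _ = C * u' := by rw [hCdef]; ring
      exact absurd (le_csSup hbddS hu'S) (not_le.mpr hu'gt)
    obtain ⟨_, z, hz1, hz2⟩ := hu₀S
    rw [hu₀eq, mul_one] at hz1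
    rw [hu₀eq] at hz2
    refine ⟨z, hmem z hz1, ?_⟩
    rw [hz2]
    simp [hwdef, hΔdef]
  · -- outer disk
    intro r hr hsubr
    rintro _ ⟨z, hz, rfl⟩
    have hxball : x ∈ Metric.ball x (t * r₀) := Metric.mem_ball_self (by positivity)
    have key : ‖g z - g x‖ ≤ 2 * v * ‖z - x‖ := by
      apply Convex.norm_image_sub_le_of_norm_fderiv_le
        (fun w hw => hdiffAt w hw) _ (convex_ball x (t * r₀)) hxball (hsubr hz)
      intro w hw
      rw [← norm_deriv_eq_norm_fderiv]
      exact (hbound w hw).2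
    rw [Metric.mem_ball, dist_eq_norm]
    have hzx : ‖z - x‖ < r := by
      have := Metric.mem_ball.mp hz; rwa [dist_eq_norm] at this
    calc ‖g z - g x‖ ≤ 2 * v * ‖z - x‖ := key
      _ < 2 * v * r := by nlinarith
end
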